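/- Let A be a nontrivial right vector space over a division ring F and let S = End(A_F) be its ring of F-linear endomorphisms equipped with the finite topology 𝒯_fin. Then (S, 𝒯_fin) is a completely simple topological ring if and only if either the dimension of A over F is infinite, or the dimension of A over F is finite and F does not admit a nondiscrete Hausdorff ring topology (every Hausdorff ring topology on F is discrete). -/

import Mathlib

/-- The finite topology (topology of pointwise convergence) on the endomorphism
ring of a module `M` over `R`: the topology induced by the inclusion
`End(M) → (M → M)` where `M` carries the discrete topology. -/
def moduleEndFinTop (R M : Type*) [Semiring R] [AddCommMonoid M] [Module R M] :
    TopologicalSpace (Module.End R M) :=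
  TopologicalSpace.induced (fun α : Module.End R M => (α : M → M))
    (@Pi.topologicalSpace _ _ (fun _ => ⊥))

/-- A ring `S` with a topology `t` is weakly simple if `S·S ≠ 0` and every
`t`-closed two-sided ideal is `0` or `S`. -/
def IsWeaklySimple (S : Type*) [NonUnitalNonAssocRing S] (t : TopologicalSpace S) : Prop :=
  (∃ a b : S, a * b ≠ 0) ∧
  ∀ J : TwoSidedIdeal S, @IsClosed S t (J : Set S) → J = ⊥ ∨ J = ⊤

/-- A ring topology `t` on `S` is minimal if every Hausdorff ring topology on `S`
coarser than `t` equals `t`. -/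
def IsMinimalRingTopology (S : Type*) [NonUnitalNonAssocRing S] (t : TopologicalSpace S) : Prop :=
  ∀ t' : TopologicalSpace S, @IsTopologicalRing S t' _ → @T2Space S t' → t ≤ t' → t' = t

/-- A topological ring is completely simple if it is Hausdorff, weakly simple and
minimal. -/
def IsCompletelySimple (S : Type*) [NonUnitalNonAssocRing S] (t : TopologicalSpace S) : Prop :=
  @T2Space S t ∧ IsWeaklySimple S t ∧ IsMinimalRingTopology S t

open Filter Topology Module

namespace EndCS

/-- A ring topology in which `{0}` is open is discrete. -/
theorem eq_bot_of_zero_open {R : Type*} [AddGroup R] (t : TopologicalSpace R)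
    (htg : @IsTopologicalAddGroup R t _) (h : @IsOpen R t {0}) : t = ⊥ := by
  letI := t
  have hsing : ∀ x : R, IsOpen ({x} : Set R) := by
    intro x
    have hc : Continuous fun y : R => y - x := by
      exact (continuous_id.sub continuous_const)
    have : ({x} : Set R) = (fun y : R => y - x) ⁻¹' {0} := by
      ext y
      simp [sub_eq_zero]
    rw [this]
    exact h.preimage hc
  ext s
  constructor
  · intro _; trivial
  · intro _
    have : s = ⋃ x ∈ s, {x} := by simp
    rw [this]
    exact isOpen_biUnion fun x _ => hsing x


section RingTopHelpers
variable {R : Type*} [Ring R]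

theorem ringTop_mul_mem (t : TopologicalSpace R) (h : @IsTopologicalRing R t _)
    {U : Set R} (hU : U ∈ @nhds R t 0) :
    ∃ V ∈ @nhds R t 0, ∀ a ∈ V, ∀ b ∈ V, a * b ∈ U := by
  letI := t
  haveI := h
  have hc : Continuous fun p : R × R => p.1 * p.2 := continuous_mul
  have ht : Filter.Tendsto (fun p : R × R => p.1 * p.2) (𝓝 (0, 0)) (𝓝 0) := by
    have := hc.tendsto (0, 0)
    simpa using this
  have hU' : (fun p : R × R => p.1 * p.2) ⁻¹' U ∈ 𝓝 ((0 : R), (0 : R)) := ht hU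
  rw [nhds_prod_eq, Filter.mem_prod_iff] at hU'
  obtain ⟨V₁, hV₁, V₂, hV₂, hsub⟩ := hU'
  refine ⟨V₁ ∩ V₂, Filter.inter_mem hV₁ hV₂, fun a ha b hb => ?_⟩
  have hab : (a, b) ∈ V₁ ×ˢ V₂ := Set.mem_prod.2 ⟨ha.1, hb.2⟩
  exact hsub hab

theorem ringTop_lmul_mem (t : TopologicalSpace R) (h : @IsTopologicalRing R t _)
    (γ : R) {V : Set R} (hV : V ∈ @nhds R t 0) :
    ∃ V' ∈ @nhds R t 0, ∀ η ∈ V', γ * η ∈ V := by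
  letI := t
  haveI := h
  have hc : Continuous fun x : R => γ * x := continuous_const.mul continuous_id
  have ht : Filter.Tendsto (fun x : R => γ * x) (𝓝 0) (𝓝 0) := by
    have := hc.tendsto 0
    simpa using this
  exact ⟨_, ht hV, fun η hη => hη⟩

theorem ringTop_conj_mem (t : TopologicalSpace R) (h : @IsTopologicalRing R t _)
    (a b : R) {U : Set R} (hU : U ∈ @nhds R t 0) :
    ∃ V ∈ @nhds R t 0, ∀ x ∈ V, a * x * b ∈ U := by
  letI := t
  haveI := h
  have hc : Continuous fun x : R => a * x * b :=
    (continuous_const.mul continuous_id).mul continuous_const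
  have ht : Filter.Tendsto (fun x : R => a * x * b) (𝓝 0) (𝓝 0) := by
    have := hc.tendsto 0
    simpa using this
  exact ⟨_, ht hU, fun x hx => hx⟩

end RingTopHelpers

section Main

variable {F A : Type*} [DivisionRing F] [AddCommGroup A] [Module F A]

local instance tA : TopologicalSpace A := ⊥
local instance dA : DiscreteTopology A := ⟨rfl⟩
local instance tS : TopologicalSpace (Module.End F A) := moduleEndFinTop F A

theorem mft_def : (tS : TopologicalSpace (Module.End F A)) =
    TopologicalSpace.induced (fun α : Module.End F A => (α : A → A)) Pi.topologicalSpace := rfl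

/-- duality: for any nonzero vector there is a functional taking value 1 on it. -/
theorem exists_dual_one {A : Type*} [AddCommGroup A] [Module F A] {v : A} (hv : v ≠ 0) :
    ∃ f : A →ₗ[F] F, f v = 1 := by
  have hs : LinearIndepOn F id ({v} : Set A) :=
    (linearIndepOn_singleton_iff F).2 hv
  let b := Module.Basis.extend hs
  have hmem : v ∈ hs.extend (Set.subset_univ _) := hs.subset_extend _ rfl
  refine ⟨b.coord ⟨v, hmem⟩, ?_⟩
  have hbv : b ⟨v, hmem⟩ = v := Basis.extend_apply_self hs ⟨v, hmem⟩
  calc (b.coord ⟨v, hmem⟩) v = (b.coord ⟨v, hmem⟩) (b ⟨v, hmem⟩) := by rw [hbv]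
  _ = 1 := by rw [Basis.coord_apply, Basis.repr_self, Finsupp.single_eq_same]

/-- there is an endomorphism killing a submodule and sending a vector outside it anywhere. -/
theorem exists_killer (W : Submodule F A) {u : A} (hu : u ∉ W) (v : A) :
    ∃ ξ : Module.End F A, (∀ x ∈ W, ξ x = 0) ∧ ξ u = v := by
  have h1 : W.mkQ u ≠ 0 := by
    rw [Submodule.mkQ_apply, ne_eq, Submodule.Quotient.mk_eq_zero]
    exact hu
  obtain ⟨g, hg⟩ := exists_dual_one (F := F) h1
  refine ⟨LinearMap.smulRight (g ∘ₗ W.mkQ) v, ?_, ?_⟩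
  · intro x hx
    have : W.mkQ x = 0 := by
      rw [Submodule.mkQ_apply, Submodule.Quotient.mk_eq_zero]; exact hx
    simp [LinearMap.smulRight_apply, this]
  · have : g (W.mkQ u) • v = v := by rw [hg, one_smul]
    simpa [LinearMap.smulRight_apply] using this

/-! ### Neighborhood structure of the finite topology -/

theorem mem_nhds_agree (β : Module.End F A) (K : Finset A) :
    {α : Module.End F A | ∀ x ∈ K, α x = β x} ∈ 𝓝 β := by
  rw [mft_def, nhds_induced, Filter.mem_comap]
  refine ⟨{g : A → A | ∀ x ∈ K, g x = β x}, ?_, fun α hα => hα⟩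
  rw [nhds_pi, Filter.mem_pi]
  refine ⟨↑K, K.finite_toSet, fun x => {β x}, fun i => ?_, ?_⟩
  · rw [nhds_discrete]; exact rfl
  · intro g hg x hx
    exact hg x hx

theorem exists_agree_subset {β : Module.End F A} {V : Set (Module.End F A)}
    (hV : V ∈ 𝓝 β) :
    ∃ K : Finset A, {α : Module.End F A | ∀ x ∈ K, α x = β x} ⊆ V := by
  rw [mft_def, nhds_induced, Filter.mem_comap] at hV
  obtain ⟨t, ht, hsub⟩ := hV
  rw [nhds_pi, Filter.mem_pi] at ht
  obtain ⟨I, hIfin, u, hu, hIu⟩ := ht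
  refine ⟨hIfin.toFinset, fun α hα => hsub ?_⟩
  apply hIu
  intro x hx
  have hax : α x = β x := hα x (hIfin.mem_toFinset.2 hx)
  have := hu x
  rw [nhds_discrete] at this
  show α x ∈ u x
  rw [hax]
  exact this

/-! ### continuity infrastructure -/

theorem mft_continuous_coe :
    Continuous (fun α : Module.End F A => (α : A → A)) := continuous_induced_dom

theorem mft_continuous_eval' (x : A) :
    Continuous (fun α : Module.End F A => α x) :=
  (continuous_apply x).comp mft_continuous_coe

theorem mft_isOpen_eval (x : A) (y : A) : IsOpen {α : Module.End F A | α x = y} := by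
  have h : {α : Module.End F A | α x = y} = (fun α : Module.End F A => α x) ⁻¹' {y} := rfl
  rw [h]
  exact (isOpen_discrete _).preimage (mft_continuous_eval' x)

theorem mft_continuous_eval2 :
    Continuous (fun p : (Module.End F A) × A => p.1 p.2) := by
  rw [continuous_def]
  intro s _
  have h : (fun p : (Module.End F A) × A => p.1 p.2) ⁻¹' s =
      ⋃ a : A, ⋃ y ∈ s, {α : Module.End F A | α a = y} ×ˢ ({a} : Set A) := by
    ext ⟨α, a⟩
    simp only [Set.mem_preimage, Set.mem_iUnion, Set.mem_prod, Set.mem_setOf_eq,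
      Set.mem_singleton_iff]
    constructor
    · intro h; exact ⟨a, α a, h, rfl, rfl⟩
    · rintro ⟨b, y, hy, h1, rfl⟩; exact h1 ▸ hy
  rw [h]
  exact isOpen_iUnion fun a => isOpen_iUnion fun y => isOpen_iUnion fun _ =>
    (mft_isOpen_eval a y).prod (isOpen_discrete _)

theorem mft_hcont {X : Type*} [TopologicalSpace X] (f : X → Module.End F A)
    (h : ∀ x : A, Continuous fun p => f p x) : Continuous f := by
  rw [mft_def]
  apply continuous_induced_rng.2
  exact continuous_pi h

theorem mft_topRing : IsTopologicalRing (Module.End F A) := by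
  haveI hA : ContinuousAdd (Module.End F A) := by
    constructor
    apply mft_hcont
    intro x
    have h : (fun p : (Module.End F A) × (Module.End F A) => (p.1 + p.2) x)
        = (fun q : A × A => q.1 + q.2) ∘ (fun p => (p.1 x, p.2 x)) := rfl
    rw [h]
    exact continuous_of_discreteTopology.comp
      (((mft_continuous_eval' x).comp continuous_fst).prodMk
        ((mft_continuous_eval' x).comp continuous_snd))
  haveI hM : ContinuousMul (Module.End F A) := by
    constructor
    apply mft_hcont
    intro x
    have h : (fun p : (Module.End F A) × (Module.End F A) => (p.1 * p.2) x)
        = (fun q : (Module.End F A) × A => q.1 q.2) ∘ (fun p => (p.1, p.2 x)) := rfl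
    rw [h]
    exact mft_continuous_eval2.comp
      (continuous_fst.prodMk ((mft_continuous_eval' x).comp continuous_snd))
  haveI hN : ContinuousNeg (Module.End F A) := by
    constructor
    apply mft_hcont
    intro x
    have h : (fun α : Module.End F A => (-α) x)
        = (fun a : A => -a) ∘ (fun α : Module.End F A => α x) := rfl
    rw [h]
    exact continuous_of_discreteTopology.comp (mft_continuous_eval' x)
  exact { }

theorem mft_t2 : T2Space (Module.End F A) := by
  have hemb : Topology.IsEmbedding (fun α : Module.End F A => (α : A → A)) := by
    refine ⟨⟨rfl⟩, ?_⟩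
    intro a b hab
    exact LinearMap.ext fun x => congrFun hab x
  exact hemb.t2Space


/-! ### Weak simplicity -/

theorem ideal_agree {α : Module.End F A} {a : A} (hαa : α a ≠ 0)
    (J : TwoSidedIdeal (Module.End F A)) (hα : α ∈ J) (β : Module.End F A) (K : Finset A) :
    ∃ γ ∈ J, ∀ x ∈ K, γ x = β x := by
  classical
  set W := Submodule.span F (K : Set A) with hW
  haveI : FiniteDimensional F W := FiniteDimensional.span_of_finite _ K.finite_toSet
  set bW : Basis (Fin (finrank F W)) F W := Module.finBasis F W with hbW
  obtain ⟨W', hcompl⟩ := Submodule.exists_isCompl W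
  set π : A →ₗ[F] W := W.linearProjOfIsCompl W' hcompl with hπ
  obtain ⟨g, hg⟩ := exists_dual_one (F := F) hαa
  set γ : Module.End F A := ∑ s : Fin (finrank F W),
      (LinearMap.smulRight g (β (bW s))) * α *
        (LinearMap.smulRight ((bW.coord s) ∘ₗ π) a) with hγ
  have hγJ : γ ∈ J := by
    refine sum_mem fun s _ => ?_
    exact J.mul_mem_right _ _ (J.mul_mem_left _ _ hα)
  have hbasis : ∀ t : Fin (finrank F W), γ ((bW t : W) : A) = β ((bW t : W) : A) := by
    intro t
    have hterm : ∀ s : Fin (finrank F W),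
        ((LinearMap.smulRight g (β (bW s))) * α *
          (LinearMap.smulRight ((bW.coord s) ∘ₗ π) a)) ((bW t : W) : A)
        = if s = t then β ((bW t : W) : A) else 0 := by
      intro s
      have hπt : π ((bW t : W) : A) = bW t :=
        Submodule.linearProjOfIsCompl_apply_left hcompl (bW t)
      have hcoord : (bW.coord s) (π ((bW t : W) : A)) = if s = t then 1 else 0 := by
        rw [hπt, Basis.coord_apply, Basis.repr_self, Finsupp.single_apply]
        simp [eq_comm]
      rw [Module.End.mul_apply, Module.End.mul_apply]
      simp only [LinearMap.smulRight_apply, LinearMap.comp_apply, hcoord]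
      by_cases hst : s = t
      · subst hst
        simp [hg]
      · simp [hst]
    rw [hγ, LinearMap.sum_apply, Finset.sum_congr rfl (fun s _ => hterm s),
      Finset.sum_ite_eq' Finset.univ t (fun _ => β ((bW t : W) : A))]
    simp
  have hval : γ ∘ₗ W.subtype = β ∘ₗ W.subtype := by
    apply bW.ext
    intro t
    simpa using hbasis t
  refine ⟨γ, hγJ, fun x hx => ?_⟩
  have hxW : x ∈ W := Submodule.subset_span hx
  have := LinearMap.congr_fun hval ⟨x, hxW⟩
  simpa using this

theorem mft_weaklySimple [Nontrivial A] :
    IsWeaklySimple (Module.End F A) (moduleEndFinTop F A) := by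
  obtain ⟨a, ha⟩ := exists_ne (0 : A)
  constructor
  · refine ⟨1, 1, ?_⟩
    rw [one_mul]
    intro h
    have h1 : (1 : Module.End F A) a = 0 := by rw [h]; rfl
    exact ha (by simpa using h1)
  · intro J hJ
    by_cases hbot : J = ⊥
    · left; exact hbot
    right
    have hex : ∃ α : Module.End F A, α ∈ J ∧ α ≠ 0 := by
      by_contra hcon
      push_neg at hcon
      apply hbot
      apply SetLike.ext
      intro x
      rw [TwoSidedIdeal.mem_bot]
      constructor
      · intro hx
        exact hcon x hx
      · rintro rfl; exact TwoSidedIdeal.zero_mem J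
    obtain ⟨α, hαJ, hα0⟩ := hex
    have hexa : ∃ x : A, α x ≠ 0 := by
      by_contra hcon
      push_neg at hcon
      exact hα0 (LinearMap.ext fun x => by simpa using hcon x)
    obtain ⟨x0, hx0⟩ := hexa
    apply TwoSidedIdeal.eq_top
    show (1 : Module.End F A) ∈ J
    suffices hmem : ∀ β : Module.End F A, β ∈ J by exact hmem 1
    intro β
    have hcl : β ∈ closure (J : Set (Module.End F A)) := by
      rw [mem_closure_iff_nhds]
      intro N hN
      obtain ⟨K, hK⟩ := exists_agree_subset hN
      obtain ⟨γ, hγJ, hγ⟩ := ideal_agree hx0 J hαJ β K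
      exact ⟨γ, hK (fun x hx => hγ x hx), hγJ⟩
    rw [hJ.closure_eq] at hcl
    exact hcl


/-! ### Finite rank: the finite topology is discrete -/

theorem mft_eq_bot (hrk : Module.rank F A < Cardinal.aleph0) :
    (moduleEndFinTop F A) = (⊥ : TopologicalSpace (Module.End F A)) := by
  haveI : Module.Finite F A := Module.rank_lt_aleph0_iff.1 hrk
  let b : Basis (Fin (finrank F A)) F A := Module.finBasis F A
  apply eq_bot_of_zero_open _ (mft_topRing).to_topologicalAddGroup
  have h : ({0} : Set (Module.End F A)) =
      ⋂ i : Fin (finrank F A), {α : Module.End F A | α (b i) = 0} := by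
    ext α
    simp only [Set.mem_singleton_iff, Set.mem_iInter, Set.mem_setOf_eq]
    constructor
    · rintro rfl i; simp
    · intro hα
      exact b.ext fun i => by simpa using hα i
  rw [h]
  exact isOpen_iInter_of_finite fun i => mft_isOpen_eval _ 0

/-! ### Finite rank, rigid division ring: minimality -/

theorem minimal_of_rigid [Nontrivial A] (hrk : Module.rank F A < Cardinal.aleph0)
    (hrig : ∀ t : TopologicalSpace F, @IsTopologicalRing F t _ → @T2Space F t →
      @DiscreteTopology F t) :
    IsMinimalRingTopology (Module.End F A) (moduleEndFinTop F A) := by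
  intro t' hring' ht2' _hle
  haveI : Module.Finite F A := Module.rank_lt_aleph0_iff.1 hrk
  set n := finrank F A with hn
  have hnpos : 0 < n := Module.finrank_pos
  let b : Basis (Fin n) F A := Module.finBasis F A
  let i0 : Fin n := ⟨0, hnpos⟩
  let φ : F → Module.End F A := fun c => LinearMap.smulRight (b.coord i0) (c • b i0)
  have hφval : ∀ (c : F) (x : A), φ c x = (b.coord i0 x) • (c • b i0) := fun _ _ => rfl
  have hcoord00 : b.coord i0 (b i0) = 1 := by
    rw [Basis.coord_apply, Basis.repr_self, Finsupp.single_eq_same]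
  have hφ0 : φ 0 = 0 := by
    apply LinearMap.ext; intro x
    rw [hφval]
    simp
  have hφinj : Function.Injective φ := by
    intro c d h
    have h1 := LinearMap.congr_fun h (b i0)
    rw [hφval, hφval, hcoord00, one_smul, one_smul] at h1
    have hb0 : b i0 ≠ 0 := b.ne_zero i0
    have h2 : (c - d) • b i0 = 0 := by rw [sub_smul, h1, sub_self]
    rcases smul_eq_zero.1 h2 with h3 | h3
    · exact sub_eq_zero.1 h3
    · exact absurd h3 hb0
  have hφadd : ∀ c d : F, φ (c + d) = φ c + φ d := by
    intro c d
    apply LinearMap.ext; intro x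
    rw [LinearMap.add_apply, hφval, hφval, hφval, add_smul, smul_add]
  have hφneg : ∀ c : F, φ (-c) = - φ c := by
    intro c
    apply LinearMap.ext; intro x
    rw [LinearMap.neg_apply, hφval, hφval, neg_smul, smul_neg]
  have hφmul : ∀ c d : F, φ (c * d) = φ d * φ c := by
    intro c d
    apply LinearMap.ext; intro x
    rw [Module.End.mul_apply, hφval, hφval, hφval]
    rw [map_smul, map_smul, hcoord00]
    simp only [smul_eq_mul, mul_one, smul_smul, mul_assoc]
  -- the induced topology on F
  letI := t'
  haveI := hring'
  haveI := ht2'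
  set τ : TopologicalSpace F := TopologicalSpace.induced φ t' with hτ
  have hφcont : Continuous[τ, t'] φ := by
    rw [hτ]; exact continuous_induced_dom
  have hringF : @IsTopologicalRing F τ _ := by
    letI := τ
    have h1 : Continuous fun p : F × F => φ p.1 := hφcont.comp continuous_fst
    have h2 : Continuous fun p : F × F => φ p.2 := hφcont.comp continuous_snd
    haveI hca : @ContinuousAdd F τ _ := by
      constructor
      rw [hτ]
      apply continuous_induced_rng.2
      have h : (φ ∘ fun p : F × F => p.1 + p.2) = fun p : F × F => φ p.1 + φ p.2 :=
        funext fun p => hφadd p.1 p.2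
      rw [h]
      exact h1.add h2
    haveI hcm : @ContinuousMul F τ _ := by
      constructor
      rw [hτ]
      apply continuous_induced_rng.2
      have h : (φ ∘ fun p : F × F => p.1 * p.2) = fun p : F × F => φ p.2 * φ p.1 :=
        funext fun p => hφmul p.1 p.2
      rw [h]
      exact h2.mul h1
    haveI hcn : @ContinuousNeg F τ _ := by
      constructor
      rw [hτ]
      apply continuous_induced_rng.2
      have h : (φ ∘ fun c : F => -c) = fun c : F => - φ c := funext fun c => hφneg c
      rw [h]
      exact hφcont.neg
    exact @IsTopologicalRing.mk F τ _ (@IsTopologicalSemiring.mk F τ _ hca hcm) hcn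
  have ht2F : @T2Space F τ := by
    letI := τ
    have hemb : Topology.IsEmbedding φ := ⟨⟨hτ⟩, hφinj⟩
    exact hemb.t2Space
  haveI hdiscF : @DiscreteTopology F τ := hrig τ hringF ht2F
  have h0open : @IsOpen F τ {0} := by
    letI := τ
    exact isOpen_discrete _
  rw [hτ, isOpen_induced_iff] at h0open
  obtain ⟨U, hUopen, hU0⟩ := h0open
  -- matrix units
  let E : Fin n → Fin n → Module.End F A := fun i j => LinearMap.smulRight (b.coord j) (b i)
  have hkey : ∀ (i j : Fin n) (α : Module.End F A),
      E i0 i * α * E j i0 = φ (b.coord i (α (b j))) := by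
    intro i j α
    apply LinearMap.ext; intro x
    rw [Module.End.mul_apply, Module.End.mul_apply]
    show (LinearMap.smulRight (b.coord i) (b i0)) (α ((LinearMap.smulRight (b.coord i0) (b j)) x))
        = φ (b.coord i (α (b j))) x
    rw [hφval, LinearMap.smulRight_apply, LinearMap.smulRight_apply, map_smul, map_smul]
    rw [smul_eq_mul, mul_smul, smul_smul]
  -- the open set V
  let V : Set (Module.End F A) := ⋂ i : Fin n, ⋂ j : Fin n,
      (fun α : Module.End F A => E i0 i * α * E j i0) ⁻¹' U
  have hVopen : IsOpen V := by
    refine isOpen_iInter_of_finite fun i => isOpen_iInter_of_finite fun j => ?_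
    refine hUopen.preimage ?_
    exact (continuous_const.mul continuous_id).mul continuous_const
  have h0V : (0 : Module.End F A) ∈ V := by
    refine Set.mem_iInter.2 fun i => Set.mem_iInter.2 fun j => ?_
    show E i0 i * 0 * E j i0 ∈ U
    rw [mul_zero, zero_mul]
    have : φ 0 ∈ U := by
      have : (0 : F) ∈ φ ⁻¹' U := by rw [hU0]; rfl
      exact this
    rwa [hφ0] at this
  have hVsub : V ⊆ {0} := by
    intro α hα
    have hcoords : ∀ i j : Fin n, b.coord i (α (b j)) = 0 := by
      intro i j
      have h1 : E i0 i * α * E j i0 ∈ U := by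
        have := Set.mem_iInter.1 (Set.mem_iInter.1 hα i) j
        exact this
      rw [hkey] at h1
      have : b.coord i (α (b j)) ∈ φ ⁻¹' U := h1
      rw [hU0] at this
      exact this
    have hbz : ∀ j : Fin n, α (b j) = 0 := by
      intro j
      have := Basis.forall_coord_eq_zero_iff b |>.1 (fun i => hcoords i j)
      exact this
    have : α = 0 := b.ext fun j => by simpa using hbz j
    exact this
  have h0eq : ({0} : Set (Module.End F A)) = V := le_antisymm (by rintro x rfl; exact h0V) hVsub
  have ht'bot : t' = ⊥ := by
    apply eq_bot_of_zero_open t' hring'.to_topologicalAddGroup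
    rw [h0eq]
    exact hVopen
  rw [ht'bot, mft_eq_bot hrk]



/-! ### Infinite rank: minimality -/

theorem minimal_of_infinite (hr : Cardinal.aleph0 ≤ Module.rank F A) :
    IsMinimalRingTopology (Module.End F A) (moduleEndFinTop F A) := by
  intro t' hring' ht2' hle
  have hT : ∀ v : A, {α : Module.End F A | α v = 0} ∈ @nhds _ t' 0 := by
    intro v
    by_cases hv0 : v = 0
    · subst hv0
      have huniv : {α : Module.End F A | α 0 = 0} = Set.univ := by
        ext α; simp
      rw [huniv]
      exact Filter.univ_mem
    by_contra hbad
    have hBAD : ∀ V ∈ @nhds _ t' (0 : Module.End F A), ∃ η ∈ V, η v ≠ 0 := by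
      intro V hV
      by_contra hc
      push_neg at hc
      exact hbad (Filter.mem_of_superset hV hc)
    by_cases hfd : ∃ V ∈ @nhds _ t' (0 : Module.End F A), ∃ K : Finset A,
        ∀ η ∈ V, η v ∈ Submodule.span F (K : Set A)
    · -- Case I: values at v eventually lie in a finite-dimensional subspace
      obtain ⟨V₁, hV₁, K₁, hK₁⟩ := hfd
      set sp : Set (Module.End F A) → Submodule F A :=
        fun V => Submodule.span F ((fun η : Module.End F A => η v) '' V) with hsp
      haveI hfd1 : FiniteDimensional F (Submodule.span F (K₁ : Set A)) :=
        FiniteDimensional.span_of_finite _ K₁.finite_toSet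
      have hV₁le : sp V₁ ≤ Submodule.span F (K₁ : Set A) := by
        apply Submodule.span_le.2
        rintro _ ⟨η, hη, rfl⟩
        exact hK₁ η hη
      haveI : FiniteDimensional F (sp V₁) := Submodule.finiteDimensional_of_le hV₁le
      have hspmono : ∀ {V W : Set (Module.End F A)}, V ⊆ W → sp V ≤ sp W := by
        intro V W hVW
        exact Submodule.span_mono (Set.image_mono hVW)
      set N : Set ℕ := {m | ∃ V ∈ @nhds _ t' (0 : Module.End F A), V ⊆ V₁ ∧
          finrank F (sp V) = m} with hN
      have hNmem : (sInf N) ∈ N := Nat.sInf_mem ⟨_, V₁, hV₁, subset_rfl, rfl⟩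
      obtain ⟨Vs, hVs, hVsV₁, hVsrank⟩ := hNmem
      haveI : FiniteDimensional F (sp Vs) :=
        Submodule.finiteDimensional_of_le (le_trans (hspmono hVsV₁) hV₁le)
      have hmin : ∀ V ∈ @nhds _ t' (0 : Module.End F A), V ⊆ Vs → sp V = sp Vs := by
        intro V hV hVVs
        apply Submodule.eq_of_le_of_finrank_le (hspmono hVVs)
        rw [hVsrank]
        exact Nat.sInf_le ⟨V, hV, hVVs.trans hVsV₁, rfl⟩
      have hinv : ∀ γ : Module.End F A, ∀ y ∈ Submodule.map γ (sp Vs), y ∈ sp Vs := by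
        intro γ y hy
        obtain ⟨V', hV', hγ⟩ := ringTop_lmul_mem t' hring' γ hVs
        have h1 : sp (V' ∩ Vs) = sp Vs :=
          hmin _ (Filter.inter_mem hV' hVs) Set.inter_subset_right
        have h2 : Submodule.map γ (sp (V' ∩ Vs)) ≤ sp Vs := by
          rw [hsp, Submodule.map_span]
          apply Submodule.span_le.2
          rintro _ ⟨_, ⟨η, hη, rfl⟩, rfl⟩
          have hγη : (γ * η) ∈ Vs := hγ η hη.1
          have : (γ * η) v = γ (η v) := rfl
          exact Submodule.subset_span ⟨γ * η, hγη, this⟩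
        rw [← h1] at hy
        exact h2 hy
      have hWne : sp Vs ≠ ⊥ := by
        obtain ⟨η, hη, hηv⟩ := hBAD Vs hVs
        intro hb
        have hmem : η v ∈ sp Vs := Submodule.subset_span ⟨η, hη, rfl⟩
        rw [hb, Submodule.mem_bot] at hmem
        exact hηv hmem
      have hWnetop : sp Vs ≠ ⊤ := by
        intro htop
        have h1 : Module.rank F (sp Vs) < Cardinal.aleph0 := by
          exact Module.rank_lt_aleph0 F _
        rw [htop] at h1
        rw [show Module.rank F (⊤ : Submodule F A) = Module.rank F A from rank_top F A] at h1
        exact absurd h1 (not_lt.2 hr)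
      obtain ⟨w, hwmem, hw0⟩ : ∃ w ∈ sp Vs, w ≠ 0 := by
        by_contra hc
        push_neg at hc
        exact hWne ((Submodule.eq_bot_iff _).2 hc)
      obtain ⟨x, hx⟩ : ∃ x, x ∉ sp Vs := by
        by_contra hc
        push_neg at hc
        exact hWnetop (Submodule.eq_top_iff'.2 hc)
      obtain ⟨f, hf⟩ := exists_dual_one (F := F) hw0
      have hfx : (LinearMap.smulRight f x) w = x := by
        rw [LinearMap.smulRight_apply, hf, one_smul]
      exact hx (hinv (LinearMap.smulRight f x) x ⟨w, hwmem, hfx⟩)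
    · -- Case II: escape is always possible
      push_neg at hfd
      have hDone : ∀ U ∈ @nhds _ t' (0 : Module.End F A), ∃ ζ ∈ U, ζ v = v := by
        intro U hU
        obtain ⟨V, hV, hVmul⟩ := ringTop_mul_mem t' hring' hU
        have hVfin : V ∈ @nhds _ (moduleEndFinTop F A) (0 : Module.End F A) :=
          Filter.le_def.1 (nhds_mono hle) V hV
        obtain ⟨K, hK⟩ := exists_agree_subset (β := 0) hVfin
        obtain ⟨η, hηV, hηnot⟩ := hfd V hV K
        obtain ⟨ξ, hξkill, hξu⟩ := exists_killer (Submodule.span F (K : Set A)) hηnot v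
        have hξV : ξ ∈ V := by
          apply hK
          intro x hx
          rw [hξkill x (Submodule.subset_span hx)]
          simp
        refine ⟨ξ * η, hVmul _ hξV _ hηV, ?_⟩
        rw [Module.End.mul_apply, hξu]
      obtain ⟨f₀, hf₀⟩ := exists_dual_one (F := F) hv0
      set e₀ : Module.End F A := LinearMap.smulRight f₀ v with he₀
      have he₀v : e₀ v = v := by
        rw [he₀, LinearMap.smulRight_apply, hf₀, one_smul]
      have he₀ne : e₀ ≠ 0 := by
        intro h
        rw [h] at he₀v
        exact hv0 (by simpa using he₀v.symm)
      have hall : ∀ U₀ ∈ @nhds _ t' (0 : Module.End F A), e₀ ∈ U₀ := by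
        intro U₀ hU₀
        obtain ⟨U, hU, hconj⟩ := ringTop_conj_mem t' hring' e₀ e₀ hU₀
        obtain ⟨ζ, hζU, hζv⟩ := hDone U hU
        have hid : e₀ * ζ * e₀ = e₀ := by
          apply LinearMap.ext
          intro x
          rw [Module.End.mul_apply, Module.End.mul_apply]
          show e₀ (ζ (e₀ x)) = e₀ x
          simp only [he₀, LinearMap.smulRight_apply, map_smul, hζv, hf₀, smul_eq_mul,
            mul_one, one_smul]
        have := hconj ζ hζU
        rwa [hid] at this
      obtain ⟨O₀, O₁, hO₀, hO₁, h0O₀, he₀O₁, hdisj⟩ :=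
        @t2_separation _ t' ht2' (0 : Module.End F A) e₀ (Ne.symm he₀ne)
      have h1 : e₀ ∈ O₀ := hall O₀ (hO₀.mem_nhds h0O₀)
      exact Set.disjoint_left.1 hdisj h1 he₀O₁
  -- Step 2: equality of neighborhood filters at 0
  have hfil : @nhds _ t' (0 : Module.End F A)
      = @nhds _ (moduleEndFinTop F A) (0 : Module.End F A) := by
    apply le_antisymm
    · -- t'-nhds ≤ tS-nhds, i.e. every tS-nhd is a t'-nhd
      intro V hV
      obtain ⟨K, hK⟩ := exists_agree_subset (β := (0 : Module.End F A)) hV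
      have hTK : {α : Module.End F A | ∀ x ∈ K, α x = (0 : Module.End F A) x}
          ∈ @nhds _ t' (0 : Module.End F A) := by
        have heq : {α : Module.End F A | ∀ x ∈ K, α x = (0 : Module.End F A) x}
            = ⋂ x ∈ (K : Set A), {α : Module.End F A | α x = 0} := by
          ext α
          simp only [Set.mem_setOf_eq, Set.mem_iInter, LinearMap.zero_apply, Finset.mem_coe]
        rw [heq]
        exact (Filter.biInter_mem K.finite_toSet).2 fun x _ => hT x
      exact Filter.mem_of_superset hTK hK
    · exact nhds_mono hle
  have htg' := @IsTopologicalRing.to_topologicalAddGroup (Module.End F A) _ t' hring'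
  have htgS := @IsTopologicalRing.to_topologicalAddGroup (Module.End F A) _ tS mft_topRing
  exact IsTopologicalAddGroup.ext htg' htgS hfil


end Main

section FinRankH
variable {F A : Type*} [DivisionRing F] [AddCommGroup A] [Module F A]

theorem rigid_of_minimal [Nontrivial A] (hrk : Module.rank F A < Cardinal.aleph0)
    (hmin : IsMinimalRingTopology (Module.End F A) (moduleEndFinTop F A))
    (tF : TopologicalSpace F) (hringF : @IsTopologicalRing F tF _) (ht2F : @T2Space F tF) :
    @DiscreteTopology F tF := by
  haveI : Module.Finite F A := Module.rank_lt_aleph0_iff.1 hrk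
  letI := tF
  haveI := hringF
  haveI := ht2F
  set n := finrank F A with hn
  set b : Basis (Fin n) F A := Module.finBasis F A with hb
  set ent : Module.End F A → (Fin n → Fin n → F) :=
    fun α i j => b.coord i (α (b j)) with hent
  letI tM : TopologicalSpace (Module.End F A) := TopologicalSpace.induced ent inferInstance
  have hentcont : @Continuous _ _ tM _ ent := continuous_induced_dom
  have hentinj : Function.Injective ent := by
    intro α β h
    apply b.ext; intro j
    have hcoords : ∀ i, b.coord i (α (b j) - β (b j)) = 0 := by
      intro i
      have h1 : ent α i j = ent β i j := congrFun (congrFun h i) j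
      rw [map_sub]
      change ent α i j - ent β i j = 0
      rw [h1, sub_self]
    exact sub_eq_zero.1 ((Basis.forall_coord_eq_zero_iff b).1 hcoords)
  have hadd : ∀ α β : Module.End F A, ent (α + β) = ent α + ent β := by
    intro α β; funext i j
    simp only [hent, LinearMap.add_apply, map_add, Pi.add_apply]
  have hneg : ∀ α : Module.End F A, ent (-α) = - ent α := by
    intro α; funext i j
    simp only [hent, LinearMap.neg_apply, map_neg, Pi.neg_apply]
  have hmulent : ∀ α β : Module.End F A, ∀ i j,
      ent (α * β) i j = ∑ k, ent β k j * ent α i k := by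
    intro α β i j
    show b.coord i ((α * β) (b j)) = ∑ k, ent β k j * ent α i k
    have h1 : (α * β) (b j) = α (β (b j)) := rfl
    have h2 : β (b j) = ∑ k, b.repr (β (b j)) k • b k := (Basis.sum_repr b (β (b j))).symm
    rw [h1]
    conv_lhs => rw [h2]
    rw [map_sum, map_sum]
    apply Finset.sum_congr rfl
    intro k _
    rw [map_smul, map_smul, smul_eq_mul]
    show b.repr (β (b j)) k * b.coord i (α (b k)) = ent β k j * ent α i k
    rw [show ent β k j = b.coord k (β (b j)) from rfl,
      show ent α i k = b.coord i (α (b k)) from rfl]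
    simp only [Basis.coord_apply]
  haveI hMring : @IsTopologicalRing (Module.End F A) tM _ := by
    have hc1 : Continuous fun p : (Module.End F A) × (Module.End F A) => ent p.1 :=
      hentcont.comp (@continuous_fst _ _ tM tM)
    have hc2 : Continuous fun p : (Module.End F A) × (Module.End F A) => ent p.2 :=
      hentcont.comp (@continuous_snd _ _ tM tM)
    haveI hca : @ContinuousAdd (Module.End F A) tM _ := by
      constructor
      apply continuous_induced_rng.2
      have h : (ent ∘ fun p : (Module.End F A) × (Module.End F A) => p.1 + p.2)
          = fun p => ent p.1 + ent p.2 := funext fun p => hadd p.1 p.2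
      rw [h]
      exact hc1.add hc2
    haveI hcm : @ContinuousMul (Module.End F A) tM _ := by
      constructor
      apply continuous_induced_rng.2
      have h : (ent ∘ fun p : (Module.End F A) × (Module.End F A) => p.1 * p.2)
          = fun p => (fun i j => ∑ k, ent p.2 k j * ent p.1 i k) := by
        funext p i j
        exact hmulent p.1 p.2 i j
      rw [h]
      apply continuous_pi; intro i
      apply continuous_pi; intro j
      apply continuous_finset_sum
      intro k _
      exact (((continuous_apply j).comp ((continuous_apply k).comp hc2))).mul
        (((continuous_apply k).comp ((continuous_apply i).comp hc1)))
    haveI hcn : @ContinuousNeg (Module.End F A) tM _ := by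
      constructor
      apply continuous_induced_rng.2
      have h : (ent ∘ fun α : Module.End F A => -α) = fun α => - ent α :=
        funext fun α => hneg α
      rw [h]
      exact hentcont.neg
    exact { }
  have hM2 : @T2Space _ tM := by
    have hemb : Topology.IsEmbedding ent := ⟨⟨rfl⟩, hentinj⟩
    exact hemb.t2Space
  have hMbot : tM = moduleEndFinTop F A := by
    apply hmin tM hMring hM2
    rw [mft_eq_bot hrk]
    exact bot_le
  have h0M : @IsOpen (Module.End F A) tM {0} := by
    rw [hMbot, mft_eq_bot hrk]
    letI : TopologicalSpace (Module.End F A) := ⊥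
    haveI : DiscreteTopology (Module.End F A) := ⟨rfl⟩
    exact isOpen_discrete _
  have hnpos : 0 < n := Module.finrank_pos
  set ι : F → Module.End F A :=
    fun c => ∑ i : Fin n, LinearMap.smulRight (b.coord i) (c • b i) with hιdef
  have hιapp : ∀ (c : F) (j : Fin n), ι c (b j) = c • b j := by
    intro c j
    rw [hιdef]
    simp only [LinearMap.coe_sum, Finset.sum_apply, LinearMap.smulRight_apply]
    rw [Finset.sum_eq_single j]
    · rw [Basis.coord_apply, Basis.repr_self, Finsupp.single_eq_same, one_smul]
    · intro k _ hkj
      rw [Basis.coord_apply, Basis.repr_self, Finsupp.single_apply, if_neg (Ne.symm hkj), zero_smul]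
    · intro hj
      exact absurd (Finset.mem_univ j) hj
  have hι : @Continuous F (Module.End F A) tF tM ι := by
    apply continuous_induced_rng.2
    show Continuous fun c : F => ent (ι c)
    apply continuous_pi; intro i
    apply continuous_pi; intro j
    have h : (fun c : F => ent (ι c) i j)
        = fun c : F => c * (b.coord i (b j)) := by
      funext c
      show b.coord i (ι c (b j)) = c * (b.coord i (b j))
      rw [hιapp, map_smul, smul_eq_mul]
    rw [h]
    exact continuous_id.mul continuous_const
  have hpre : ι ⁻¹' {0} = {0} := by
    ext c
    simp only [Set.mem_preimage, Set.mem_singleton_iff]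
    constructor
    · intro h
      have h1 : ι c (b ⟨0, hnpos⟩) = 0 := by rw [h]; rfl
      rw [hιapp] at h1
      rcases smul_eq_zero.1 h1 with h3 | h3
      · exact h3
      · exact absurd h3 (b.ne_zero _)
    · rintro rfl
      apply b.ext
      intro j
      rw [hιapp, zero_smul]
      rfl
  have h0F : @IsOpen F tF {0} := by
    have := h0M.preimage hι
    rwa [hpre] at this
  have : tF = ⊥ :=
    eq_bot_of_zero_open tF (@IsTopologicalRing.to_topologicalAddGroup F _ tF hringF) h0F
  exact ⟨this⟩

end FinRankH
end EndCS

/-- For a nontrivial vector space `A` over a division ring `F`, the endomorphism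
ring of `A` with the finite topology is completely simple iff either `A` is
infinite dimensional, or `A` is finite dimensional and `F` admits no nondiscrete
Hausdorff ring topology. -/
theorem end_completelySimple_iff {F A : Type*} [DivisionRing F] [AddCommGroup A]
    [Module F A] [Nontrivial A] :
    IsCompletelySimple (Module.End F A) (moduleEndFinTop F A) ↔
      (Cardinal.aleph0 ≤ Module.rank F A ∨
        (Module.rank F A < Cardinal.aleph0 ∧
          ∀ t : TopologicalSpace F, @IsTopologicalRing F t _ → @T2Space F t →
            @DiscreteTopology F t)) := by
  constructor
  · intro hCS
    by_cases hinf : Cardinal.aleph0 ≤ Module.rank F A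
    · exact Or.inl hinf
    · right
      have hfin : Module.rank F A < Cardinal.aleph0 := not_le.1 hinf
      exact ⟨hfin, fun t ht h2 => EndCS.rigid_of_minimal hfin hCS.2.2 t ht h2⟩
  · rintro (hinf | ⟨hfin, hrig⟩)
    · exact ⟨EndCS.mft_t2, EndCS.mft_weaklySimple, EndCS.minimal_of_infinite hinf⟩
    · exact ⟨EndCS.mft_t2, EndCS.mft_weaklySimple, EndCS.minimal_of_rigid hfin hrig⟩
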